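/- Let A ∈ ℝ^{n×n} be a symmetric positive definite matrix with smallest eigenvalue λ_min > 0 and largest eigenvalue λ_max, let κ = λ_max/λ_min and γ = (κ−1)/(κ+1), and let ‖v‖_A = √⟨v, A v⟩ denote the A-norm on ℝⁿ and ‖·‖ the Euclidean norm. Let X ∈ ℝⁿ, let C : ℝⁿ → ℝⁿ satisfy ‖X − C(Y)‖_A ≤ γ ‖X − Y‖_A for all Y ∈ ℝⁿ, and let ε > 0 and T : ℝⁿ → ℝⁿ satisfy ‖Z − T(Z)‖ ≤ ε for all Z ∈ ℝⁿ. Then for every δ > 0 and every X₀ ∈ ℝⁿ, if ε < δ / (√λ_max (κ+1)), there exists j ∈ ℕ such that ‖X − (T∘C)^j(X₀)‖_A < δ. -/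

import Mathlib

open Matrix BigOperators

private lemma star_mulVec_real {n : ℕ} (M : Matrix (Fin n) (Fin n) ℝ) (v : Fin n → ℝ) :
    star M *ᵥ v = v ᵥ* M := by
  ext j
  simp [Matrix.mulVec, Matrix.vecMul, dotProduct, Matrix.star_apply, mul_comm]

/-- Upper bound on the quadratic form of a real symmetric matrix in terms of an
upper bound of its eigenvalues. -/
private lemma quad_le {n : ℕ} {A : Matrix (Fin n) (Fin n) ℝ} (hA : A.IsHermitian)
    {lmax : ℝ} (hub : ∀ i, hA.eigenvalues i ≤ lmax) (v : Fin n → ℝ) :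
    v ⬝ᵥ A *ᵥ v ≤ lmax * (v ⬝ᵥ v) := by
  classical
  set U : Matrix (Fin n) (Fin n) ℝ :=
    (Matrix.IsHermitian.eigenvectorUnitary hA : Matrix (Fin n) (Fin n) ℝ) with hU
  set w : Fin n → ℝ := star U *ᵥ v with hw
  have hvU : v ᵥ* U = w := (star_mulVec_real U v).symm
  have hUU : U * star U = 1 :=
    Matrix.mem_unitaryGroup_iff.mp (Matrix.IsHermitian.eigenvectorUnitary hA).2
  have hvv : v ⬝ᵥ v = w ⬝ᵥ w := by
    have h1 : w ᵥ* star U = U *ᵥ w := by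
      rw [← star_mulVec_real (star U) w, star_star]
    have h2 : U *ᵥ w = v := by
      rw [hw, Matrix.mulVec_mulVec, hUU, Matrix.one_mulVec]
    have : w ⬝ᵥ w = v ⬝ᵥ v := calc
      w ⬝ᵥ w = w ⬝ᵥ (star U *ᵥ v) := by rw [← hw]
      _ = (w ᵥ* star U) ⬝ᵥ v := by rw [Matrix.dotProduct_mulVec]
      _ = v ⬝ᵥ v := by rw [h1, h2]
    exact this.symm
  have key : v ⬝ᵥ A *ᵥ v = ∑ i, hA.eigenvalues i * (w i * w i) := by
    conv_lhs => rw [hA.spectral_theorem, Unitary.conjStarAlgAut_apply]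
    rw [← Matrix.mulVec_mulVec, ← Matrix.mulVec_mulVec, Matrix.dotProduct_mulVec, hvU, ← hw]
    simp [dotProduct, Matrix.mulVec_diagonal, mul_assoc, mul_comm, mul_left_comm]
  rw [key, hvv, dotProduct, Finset.mul_sum]
  exact Finset.sum_le_sum fun i _ =>
    mul_le_mul_of_nonneg_right (hub i) (mul_self_nonneg _)

/-- Lemma 4 of the paper: convergence of the CG algorithm
including truncation. `C` is one exact CG step (a contraction toward the exact
solution `X` in the `A`-norm with rate `γ = (κ−1)/(κ+1)`) and `T` is a
truncation with Euclidean error at most `ε`; if `ε < δ/(√λ_max (κ+1))` then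
the perturbed iteration reaches accuracy `δ` in the `A`-norm. -/
theorem perturbed_cg_convergence
    {n : ℕ}
    (A : Matrix (Fin n) (Fin n) ℝ) (hA : A.PosDef)
    (lmin lmax : ℝ)
    (hmin : IsLeast (Set.range hA.isHermitian.eigenvalues) lmin)
    (hmax : IsGreatest (Set.range hA.isHermitian.eigenvalues) lmax)
    (hlmin : 0 < lmin)
    (κ γ : ℝ) (hκ : κ = lmax / lmin) (hγ : γ = (κ - 1) / (κ + 1))
    (normA : (Fin n → ℝ) → ℝ)
    (hnormA : ∀ v, normA v = Real.sqrt (v ⬝ᵥ A.mulVec v))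
    (norm2 : (Fin n → ℝ) → ℝ)
    (hnorm2 : ∀ v, norm2 v = Real.sqrt (v ⬝ᵥ v))
    (X : Fin n → ℝ) (C : (Fin n → ℝ) → (Fin n → ℝ))
    (hC : ∀ Y, normA (X - C Y) ≤ γ * normA (X - Y))
    (ε : ℝ) (hε : 0 < ε) (T : (Fin n → ℝ) → (Fin n → ℝ))
    (hT : ∀ Z, norm2 (Z - T Z) ≤ ε)
    (δ : ℝ) (hδ : 0 < δ) (X₀ : Fin n → ℝ)
    (hεδ : ε < δ / (Real.sqrt lmax * (κ + 1))) :
    ∃ j : ℕ, normA (X - (T ∘ C)^[j] X₀) < δ := by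
  classical
  -- basic facts about the eigenvalue bounds
  have hminmax : lmin ≤ lmax := hmax.2 hmin.1
  have hlmax : 0 < lmax := hlmin.trans_le hminmax
  have hub : ∀ i, hA.isHermitian.eigenvalues i ≤ lmax := fun i => hmax.2 ⟨i, rfl⟩
  have hκ1 : 1 ≤ κ := by rw [hκ]; exact (one_le_div hlmin).mpr hminmax
  have hκpos : 0 < κ + 1 := by linarith
  have hγ0 : 0 ≤ γ := by
    rw [hγ]; exact div_nonneg (by linarith) hκpos.le
  have hγ1 : γ < 1 := by
    rw [hγ]; rw [div_lt_one hκpos]; linarith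
  have h1γ : 1 - γ = 2 / (κ + 1) := by
    rw [hγ]; field_simp; ring
  have h1γpos : 0 < 1 - γ := by linarith
  have hsqrt : 0 < Real.sqrt lmax := Real.sqrt_pos.mpr hlmax
  -- normA is the norm of the inner product space induced by `A`
  letI instN := Matrix.toNormedAddCommGroup A hA
  letI instI := Matrix.toInnerProductSpace A hA.posSemidef
  have hnorm_eq : ∀ v : Fin n → ℝ, normA v = @norm _ instN.toNorm v := by
    intro v
    rw [hnormA, @norm_eq_sqrt_re_inner ℝ (Fin n → ℝ) _ instN.toSeminormedAddCommGroup instI v]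
    exact congrArg Real.sqrt (dotProduct_comm v (A *ᵥ v))
  have htriangle : ∀ a b : Fin n → ℝ, normA (a + b) ≤ normA a + normA b := by
    intro a b
    rw [hnorm_eq, hnorm_eq, hnorm_eq]
    exact @norm_add_le (Fin n → ℝ) (@SeminormedAddCommGroup.toSeminormedAddGroup _ instN.toSeminormedAddCommGroup) a b
  -- normA is bounded by √lmax times the euclidean norm
  have hAbound : ∀ v, normA v ≤ Real.sqrt lmax * norm2 v := by
    intro v
    rw [hnormA, hnorm2, ← Real.sqrt_mul hlmax.le]
    exact Real.sqrt_le_sqrt (quad_le hA.isHermitian hub v)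
  set d : ℝ := Real.sqrt lmax * ε with hd
  have hd0 : 0 ≤ d := mul_nonneg hsqrt.le hε.le
  -- the key size bound on the truncation error measured in the A-norm
  have hdδ : d / (1 - γ) < δ / 2 := by
    have hs : 0 < Real.sqrt lmax * (κ + 1) := mul_pos hsqrt hκpos
    have h1 : ε * (Real.sqrt lmax * (κ + 1)) < δ := (lt_div_iff₀ hs).mp hεδ
    rw [h1γ, div_div_eq_mul_div]
    rw [div_lt_div_iff₀ (by norm_num : (0:ℝ) < 2) (by norm_num : (0:ℝ) < 2)]
    nlinarith
  -- the error sequence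
  set e : ℕ → ℝ := fun j => normA (X - (T ∘ C)^[j] X₀) with he
  have hstep : ∀ j, e (j + 1) ≤ γ * e j + d := by
    intro j
    have hY : (T ∘ C)^[j + 1] X₀ = T (C ((T ∘ C)^[j] X₀)) := by
      rw [Function.iterate_succ_apply']; rfl
    set Y := (T ∘ C)^[j] X₀ with hYdef
    have hsplit : X - T (C Y) = (X - C Y) + (C Y - T (C Y)) :=
      (sub_add_sub_cancel X (C Y) (T (C Y))).symm
    have htr : normA (C Y - T (C Y)) ≤ d := by
      calc normA (C Y - T (C Y)) ≤ Real.sqrt lmax * norm2 (C Y - T (C Y)) := hAbound _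
        _ ≤ Real.sqrt lmax * ε := mul_le_mul_of_nonneg_left (hT (C Y)) hsqrt.le
    calc e (j + 1) = normA ((X - C Y) + (C Y - T (C Y))) := by
          simp only [he, hY, hsplit]
      _ ≤ normA (X - C Y) + normA (C Y - T (C Y)) := htriangle _ _
      _ ≤ γ * e j + d := add_le_add (hC Y) htr
  -- by induction, geometric decay plus accumulated truncation error
  have hgeom : ∀ j, e j ≤ γ ^ j * e 0 + d * ∑ i ∈ Finset.range j, γ ^ i := by
    intro j
    induction j with
    | zero => simp
    | succ j ih =>
      calc e (j + 1) ≤ γ * e j + d := hstep j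
        _ ≤ γ * (γ ^ j * e 0 + d * ∑ i ∈ Finset.range j, γ ^ i) + d := by
            have := mul_le_mul_of_nonneg_left ih hγ0
            linarith
        _ = γ ^ (j + 1) * e 0 + d * ∑ i ∈ Finset.range (j + 1), γ ^ i := by
            rw [geom_sum_succ]; ring
  -- the accumulated error is bounded by d / (1 - γ)
  have hsum : ∀ j, (∑ i ∈ Finset.range j, γ ^ i) ≤ 1 / (1 - γ) := by
    intro j
    rw [geom_sum_eq (by intro h; rw [h] at hγ1; exact lt_irrefl 1 hγ1 : γ ≠ 1)]
    have hrw : (γ ^ j - 1) / (γ - 1) = (1 - γ ^ j) / (1 - γ) := by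
      rw [← neg_div_neg_eq]; ring_nf
    rw [hrw, div_le_div_iff₀ h1γpos h1γpos]
    have hpow : 0 ≤ γ ^ j := pow_nonneg hγ0 j
    nlinarith
  -- choose j so that the geometric part is below δ/2
  have he0 : 0 ≤ e 0 := by
    simp only [he, hnormA]; exact Real.sqrt_nonneg _
  have hM : (0:ℝ) < e 0 + 1 := by linarith
  obtain ⟨j, hj⟩ := exists_pow_lt_of_lt_one (div_pos (by linarith : (0:ℝ) < δ / 2) hM) hγ1
  refine ⟨j, ?_⟩
  have h1 : γ ^ j * e 0 < δ / 2 := by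
    have h2 : γ ^ j * e 0 ≤ γ ^ j * (e 0 + 1) :=
      mul_le_mul_of_nonneg_left (by linarith) (pow_nonneg hγ0 j)
    have h3 : γ ^ j * (e 0 + 1) < (δ / 2 / (e 0 + 1)) * (e 0 + 1) :=
      mul_lt_mul_of_pos_right hj hM
    rw [div_mul_cancel₀ _ hM.ne'] at h3
    linarith
  have h4 : d * ∑ i ∈ Finset.range j, γ ^ i ≤ d / (1 - γ) := by
    calc d * ∑ i ∈ Finset.range j, γ ^ i ≤ d * (1 / (1 - γ)) :=
          mul_le_mul_of_nonneg_left (hsum j) hd0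
      _ = d / (1 - γ) := by rw [mul_one_div]
  calc normA (X - (T ∘ C)^[j] X₀) = e j := rfl
    _ ≤ γ ^ j * e 0 + d * ∑ i ∈ Finset.range j, γ ^ i := hgeom j
    _ < δ / 2 + δ / 2 := by
        have := h4.trans_lt hdδ
        linarith
    _ = δ := by ring
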